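/- arXiv:1308.3124 — 4 statements merged into one kernel-verified Lean document; each statement's English description precedes it below -/
import Mathlib

section
/- Fix an integer N ≥ 1, a real q with 0 < q < 1, positive reals a_1,…,a_N, and reals R, L ≥ 0. For every strictly decreasing x ∈ ℤ^N (x_1 > x_2 > … > x_N) and every y ∈ Y^N one has (𝓛^{q-PushASEP} H(·,y))(x) = (𝓛^{dual} H(x,·))(y), where (𝓛^{q-PushASEP} f)(x) := Σ_{i=1}^N R a_i (1 − q^{x_{i−1}−x_i−1})(f(x⁺_i) − f(x)) + Σ_{i=1}^N L a_i^{−1} Σ_{j=i}^N q^{x_i−x_j−(j−i)} (1 − q^{x_j−x_{j+1}−1})(f(x⁻_{j,i}) − f(x)) with the conventions q^{x_0−x_1−1} := 0 and q^{x_N−x_{N+1}−1} := 0, and (𝓛^{dual} g)(y) := Σ_{i=1}^N R a_i (1 − q^{y_i})(g(y^{i,i−1}) − g(y)) + Σ_{i=1}^N L a_i^{−1} Σ_{j=i}^N (q^{−y_j} − 1) q^{−(y_i+…+y_{j−1})} g(y^{j,i}), where any term whose explicit coefficient vanishes is omitted (so shifted arguments y^{j,i} that would leave Y^N never contribute). 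-/
/-!
STATEMENT 0: duality between the q-PushASEP generator and the dual operator,
applied to the function H(x,y).
-/

/-- `H(x,y) = 0` if `y₀ > 0`, and `H(x,y) = ∏_{i=1}^N q^{(xᵢ+i) yᵢ}` otherwise. -/
noncomputable def Hfun (q : ℝ) (N : ℕ) (x : ℕ → ℤ) (y : ℕ → ℤ) : ℝ :=
  if 0 < y 0 then 0 else ∏ i ∈ Finset.Icc 1 N, q ^ ((x i + (i : ℤ)) * y i)

/-- `x⁺ᵢ`: the configuration `x` with `xᵢ` increased by 1. -/
def xplus (x : ℕ → ℤ) (i : ℕ) : ℕ → ℤ := Function.update x i (x i + 1)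

/-- `x⁻_{j,i}`: the configuration `x` with `x_i, …, x_j` each decreased by 1. -/
def xminus (x : ℕ → ℤ) (j i : ℕ) : ℕ → ℤ :=
  fun m => if i ≤ m ∧ m ≤ j then x m - 1 else x m

/-- `y^{j,i}`: `y` with `y_j` decreased by 1 and `y_i` increased by 1 (so `y^{i,i} = y`). -/
def ymove (y : ℕ → ℤ) (j i : ℕ) : ℕ → ℤ :=
  fun m => y m + (if m = i then 1 else 0) - (if m = j then 1 else 0)

/-- The generator of the q-PushASEP, with the conventions
`q^{x₀ - x₁ - 1} := 0` and `q^{x_N - x_{N+1} - 1} := 0`. -/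
noncomputable def genPush (N : ℕ) (q : ℝ) (a : ℕ → ℝ) (R L : ℝ)
    (f : (ℕ → ℤ) → ℝ) (x : ℕ → ℤ) : ℝ :=
  (∑ i ∈ Finset.Icc 1 N, R * a i * (1 - (if i = 1 then 0 else q ^ (x (i-1) - x i - 1)))
      * (f (xplus x i) - f x))
  + ∑ i ∈ Finset.Icc 1 N, L * (a i)⁻¹ *
      ∑ j ∈ Finset.Icc i N, q ^ (x i - x j - ((j : ℤ) - (i : ℤ)))
        * (1 - (if j = N then 0 else q ^ (x j - x (j+1) - 1)))
        * (f (xminus x j i) - f x)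

/-- The dual operator `𝓛^{dual}`. -/
noncomputable def genDual (N : ℕ) (q : ℝ) (a : ℕ → ℝ) (R L : ℝ)
    (g : (ℕ → ℤ) → ℝ) (y : ℕ → ℤ) : ℝ :=
  (∑ i ∈ Finset.Icc 1 N, R * a i * (1 - q ^ (y i)) * (g (ymove y i (i-1)) - g y))
  + ∑ i ∈ Finset.Icc 1 N, L * (a i)⁻¹ *
      ∑ j ∈ Finset.Icc i N,
        (q ^ (-(y j)) - 1) * q ^ (-(∑ m ∈ Finset.Ico i j, y m)) * g (ymove y j i)


lemma prod_zpow_eq (q : ℝ) (hq : q ≠ 0) (s : Finset ℕ) (f : ℕ → ℤ) :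
    ∏ m ∈ s, q ^ f m = q ^ (∑ m ∈ s, f m) := by
  classical
  induction s using Finset.induction with
  | empty => simp
  | @insert a s h ih => rw [Finset.prod_insert h, Finset.sum_insert h, ih, zpow_add₀ hq]

lemma tel_sum (f : ℕ → ℝ) (i N : ℕ) (h : i ≤ N) :
    ∑ j ∈ Finset.Icc i N, (f j - f (j+1)) = f i - f (N+1) := by
  induction N with
  | zero =>
    interval_cases i
    simp
  | succ n ih =>
    rcases Nat.lt_or_ge i (n+1) with h' | h'
    · rw [Finset.sum_Icc_succ_top (by omega), ih (by omega)]
      ring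
    · have : i = n + 1 := by omega
      subst this
      simp

/-- `(𝓛^{q-PushASEP} H(·,y))(x) = (𝓛^{dual} H(x,·))(y)`. -/
theorem qPushASEP_duality (N : ℕ) (hN : 1 ≤ N) (q : ℝ) (hq0 : 0 < q) (hq1 : q < 1)
    (a : ℕ → ℝ) (ha : ∀ i, 0 < a i) (R L : ℝ) (hR : 0 ≤ R) (hL : 0 ≤ L)
    (x : ℕ → ℤ) (hx : ∀ i, 1 ≤ i → i < N → x (i+1) < x i)
    (y : ℕ → ℤ) (hy : ∀ m, m ≤ N → 0 ≤ y m) :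
    genPush N q a R L (fun x' => Hfun q N x' y) x
      = genDual N q a R L (fun y' => Hfun q N x y') y := by
  classical
  have hq : q ≠ 0 := ne_of_gt hq0
  have hy0 : 0 ≤ y 0 := hy 0 (Nat.zero_le N)
  rcases lt_or_ge 0 (y 0) with hpos | hle
  · -- degenerate case: y₀ > 0, everything vanishes
    have h0 : ∀ y' : ℕ → ℤ, 0 < y' 0 → Hfun q N x y' = 0 := by
      intro y' h
      simp [Hfun, h]
    have hP : ∀ x' : ℕ → ℤ, Hfun q N x' y = 0 := by
      intro x'
      simp [Hfun, hpos]
    have hA : ∀ i ∈ Finset.Icc 1 N, Hfun q N x (ymove y i (i-1)) = 0 := by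
      intro i hi
      rw [Finset.mem_Icc] at hi
      apply h0
      have : ¬ (0 = i) := by omega
      simp only [ymove, this, if_false]
      split_ifs <;> omega
    have hB : ∀ i j : ℕ, 1 ≤ i → i ≤ j → Hfun q N x (ymove y j i) = 0 := by
      intro i j h1 h2
      apply h0
      have h3 : ¬ (0 = i) := by omega
      have h4 : ¬ (0 = j) := by omega
      simp only [ymove, h3, h4, if_false]
      omega
    have hL1 : ∑ i ∈ Finset.Icc 1 N,
        R * a i * (1 - (if i = 1 then 0 else q ^ (x (i-1) - x i - 1)))
          * (Hfun q N (xplus x i) y - Hfun q N x y) = 0 := by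
      apply Finset.sum_eq_zero
      intro i hi
      rw [hP, hP]
      ring
    have hL2 : ∑ i ∈ Finset.Icc 1 N, L * (a i)⁻¹ *
        ∑ j ∈ Finset.Icc i N, q ^ (x i - x j - ((j : ℤ) - (i : ℤ)))
          * (1 - (if j = N then 0 else q ^ (x j - x (j+1) - 1)))
          * (Hfun q N (xminus x j i) y - Hfun q N x y) = 0 := by
      apply Finset.sum_eq_zero
      intro i hi
      rw [Finset.sum_eq_zero, mul_zero]
      intro j hj
      rw [hP, hP]
      ring
    have hR1 : ∑ i ∈ Finset.Icc 1 N, R * a i * (1 - q ^ y i)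
        * (Hfun q N x (ymove y i (i-1)) - Hfun q N x y) = 0 := by
      apply Finset.sum_eq_zero
      intro i hi
      rw [hA i hi, hP]
      ring
    have hR2 : ∑ i ∈ Finset.Icc 1 N, L * (a i)⁻¹ * ∑ j ∈ Finset.Icc i N,
        (q ^ (-(y j)) - 1) * q ^ (-(∑ m ∈ Finset.Ico i j, y m))
          * Hfun q N x (ymove y j i) = 0 := by
      apply Finset.sum_eq_zero
      intro i hi
      rw [Finset.mem_Icc] at hi
      rw [Finset.sum_eq_zero, mul_zero]
      intro j hj
      rw [Finset.mem_Icc] at hj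
      rw [hB i j hi.1 hj.1, mul_zero]
    simp only [genPush, genDual]
    rw [hL1, hL2, hR1, hR2]
  · -- main case: y₀ = 0
    have hnot : ¬ (0 < y 0) := not_lt.mpr hle
    have hy00 : y 0 = 0 := le_antisymm hle hy0
    set T : ℤ := ∑ m ∈ Finset.Icc 1 N, (x m + (m : ℤ)) * y m with hT
    have hHx : ∀ x' : ℕ → ℤ,
        Hfun q N x' y = q ^ (∑ m ∈ Finset.Icc 1 N, (x' m + (m : ℤ)) * y m) := by
      intro x'
      rw [Hfun, if_neg hnot, prod_zpow_eq q hq]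
    have hH0 : Hfun q N x y = q ^ T := hHx x
    have hplus : ∀ i : ℕ, 1 ≤ i → i ≤ N →
        Hfun q N (xplus x i) y = q ^ (y i + T) := by
      intro i h1 h2
      rw [hHx]
      congr 1
      have hmem : i ∈ Finset.Icc 1 N := Finset.mem_Icc.mpr ⟨h1, h2⟩
      have step : ∀ m ∈ Finset.Icc 1 N,
          (xplus x i m + (m : ℤ)) * y m
            = (x m + (m : ℤ)) * y m + (if m = i then y i else 0) := by
        intro m _
        rcases eq_or_ne m i with rfl | h
        · simp [xplus]
          ring
        · simp [xplus, Function.update_apply, h]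
      rw [Finset.sum_congr rfl step, Finset.sum_add_distrib,
        Finset.sum_ite_eq' (Finset.Icc 1 N) i (fun _ => y i), if_pos hmem, hT]
      ring
    have hminus : ∀ i j : ℕ, 1 ≤ i → i ≤ j → j ≤ N →
        Hfun q N (xminus x j i) y = q ^ (T - ∑ m ∈ Finset.Icc i j, y m) := by
      intro i j h1 h2 h3
      rw [hHx]
      congr 1
      have step : ∀ m ∈ Finset.Icc 1 N,
          (xminus x j i m + (m : ℤ)) * y m
            = (x m + (m : ℤ)) * y m - (if m ∈ Finset.Icc i j then y m else 0) := by
        intro m _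
        by_cases h : i ≤ m ∧ m ≤ j
        · simp only [xminus, if_pos h, Finset.mem_Icc, if_pos h]
          ring
        · simp only [xminus, if_neg h, Finset.mem_Icc, if_neg h]
          ring
      rw [Finset.sum_congr rfl step, Finset.sum_sub_distrib,
        Finset.sum_ite_mem (Finset.Icc 1 N) (Finset.Icc i j) (fun m => y m),
        Finset.inter_eq_right.mpr (Finset.Icc_subset_Icc (by omega) (by omega)), hT]
    have hymove : ∀ i j : ℕ, 1 ≤ i → i ≤ j → j ≤ N →
        Hfun q N x (ymove y j i) = q ^ (T + (x i + (i : ℤ)) - (x j + (j : ℤ))) := by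
      intro i j h1 h2 h3
      have h0' : (ymove y j i) 0 = y 0 := by
        have e1 : ¬ ((0:ℕ) = i) := by omega
        have e2 : ¬ ((0:ℕ) = j) := by omega
        simp [ymove, e1, e2]
      rw [Hfun, if_neg (by rw [h0']; exact hnot), prod_zpow_eq q hq]
      congr 1
      have hmemi : i ∈ Finset.Icc 1 N := Finset.mem_Icc.mpr ⟨h1, by omega⟩
      have hmemj : j ∈ Finset.Icc 1 N := Finset.mem_Icc.mpr ⟨by omega, h3⟩
      have step : ∀ m ∈ Finset.Icc 1 N,
          (x m + (m : ℤ)) * ymove y j i m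
            = (x m + (m : ℤ)) * y m + ((if m = i then x i + (i:ℤ) else 0)
              - (if m = j then x j + (j:ℤ) else 0)) := by
        intro m _
        simp only [ymove]
        by_cases h1 : m = i
        · subst h1
          by_cases h2 : m = j
          · subst h2
            simp
          · simp [h2]
            ring
        · by_cases h2 : m = j
          · subst h2
            simp [h1]
            ring
          · simp [h1, h2]
      rw [Finset.sum_congr rfl step, Finset.sum_add_distrib, Finset.sum_sub_distrib,
        Finset.sum_ite_eq' (Finset.Icc 1 N) i (fun _ => x i + (i:ℤ)), if_pos hmemi,
        Finset.sum_ite_eq' (Finset.Icc 1 N) j (fun _ => x j + (j:ℤ)), if_pos hmemj, hT]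
      ring
    have hy10 : Hfun q N x (ymove y 1 0) = 0 := by
      rw [Hfun, if_pos]
      have : ¬ ((0:ℕ) = 1) := by omega
      simp [ymove, this, hy00]
    simp only [genPush, genDual]
    congr 1
    · -- R part
      apply Finset.sum_congr rfl
      intro i hi
      rw [Finset.mem_Icc] at hi
      rcases eq_or_ne i 1 with rfl | hne
      · rw [if_pos rfl, hplus 1 le_rfl hN, hH0]
        show R * a 1 * (1 - 0) * (q ^ (y 1 + T) - q ^ T)
          = R * a 1 * (1 - q ^ y 1) * (Hfun q N x (ymove y 1 (1-1)) - q ^ T)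
        norm_num
        rw [hy10, zpow_add₀ hq]
        ring
      · rw [if_neg hne, hplus i hi.1 hi.2, hH0,
          hymove (i-1) i (by omega) (by omega) hi.2]
        have hc : ((i - 1 : ℕ) : ℤ) = (i : ℤ) - 1 := by omega
        rw [hc]
        simp only [zpow_add₀ hq, zpow_sub₀ hq, zpow_one]
        field_simp
        ring
    · -- L part
      apply Finset.sum_congr rfl
      intro i hi
      rw [Finset.mem_Icc] at hi
      congr 1
      set Φ : ℕ → ℝ := fun k =>
        if k ≤ N then
          q ^ ((x i + (i:ℤ)) - (x k + (k:ℤ)) + T - ∑ m ∈ Finset.Ico i k, y m)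
            - q ^ ((x i + (i:ℤ)) - (x k + (k:ℤ)) + T)
        else 0 with hΦ
      have key : ∀ j ∈ Finset.Icc i N,
          q ^ (x i - x j - ((j : ℤ) - (i : ℤ)))
            * (1 - (if j = N then 0 else q ^ (x j - x (j+1) - 1)))
            * (Hfun q N (xminus x j i) y - Hfun q N x y)
          = (q ^ (-(y j)) - 1) * q ^ (-(∑ m ∈ Finset.Ico i j, y m))
              * Hfun q N x (ymove y j i) + (Φ j - Φ (j+1)) := by
        intro j hj
        rw [Finset.mem_Icc] at hj
        have hS : ∑ m ∈ Finset.Icc i j, y m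
            = (∑ m ∈ Finset.Ico i j, y m) + y j := by
          rw [← Finset.Ico_add_one_right_eq_Icc, Finset.sum_Ico_succ_top (by omega)]
        have hIco : ∑ m ∈ Finset.Ico i (j+1), y m
            = (∑ m ∈ Finset.Ico i j, y m) + y j := by
          rw [Finset.sum_Ico_succ_top (by omega)]
        rw [hminus i j hi.1 hj.1 hj.2, hH0, hymove i j hi.1 hj.1 hj.2, hS]
        rcases eq_or_ne j N with hjN | hjN
        · rw [if_pos hjN]
          simp only [hΦ]
          simp only [if_pos hj.2, if_neg (show ¬ j + 1 ≤ N by omega)]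
          simp only [zpow_add₀ hq, zpow_sub₀ hq, zpow_neg, zpow_one]
          field_simp
          ring
        · rw [if_neg hjN]
          simp only [hΦ]
          simp only [if_pos hj.2, if_pos (show j + 1 ≤ N by omega), hIco]
          have hc : ((j + 1 : ℕ) : ℤ) = (j : ℤ) + 1 := by omega
          rw [hc]
          simp only [zpow_add₀ hq, zpow_sub₀ hq, zpow_neg, zpow_one]
          field_simp
          ring
      rw [Finset.sum_congr rfl key, Finset.sum_add_distrib,
        tel_sum Φ i N hi.2]
      have hΦi : Φ i = 0 := by
        simp [hΦ, hi.2]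
      have hΦN : Φ (N+1) = 0 := by
        simp [hΦ]
      rw [hΦi, hΦN]
      ring
end

section
/- Fix N, k ≥ 1, 0 < q < 1, positive reals a_1, a_2, a_3, … and R, L ≥ 0, and let h_0 : Y^N_k → ℝ. Suppose u : ℝ_{≥0} × ℤ_{≥0}^k → ℝ is differentiable in t and satisfies: (i) for all t ≥ 0 and all n ∈ ℤ_{≥0}^k with every coordinate n_i ≥ 1, (d/dt) u(t,n) = R(1−q) Σ_{i=1}^k ([∇_a]_i u)(t,n) + L(1−q^{−1}) Σ_{i=1}^k ([∇_a^{−1}]_i u)(t,n); (ii) for all t ≥ 0 and all n ∈ ℤ_{≥0}^k such that n_i = n_{i+1} for some 1 ≤ i ≤ k−1: ([∇_a^{−1}]_i − q^{−1}[∇_a^{−1}]_{i+1}) u(t,n) = 0, and whenever additionally n_i ≥ 1, ([∇_a]_i − q[∇_a]_{i+1}) u(t,n) = 0; (iii) u(t,n) = 0 for all t ≥ 0 whenever n_k = 0; (iv) u(0, n(y)) = h_0(y) for all y ∈ Y^N_k. Then the function h(t,y) := u(t, n(y)) on ℝ_{≥0} × Y^N_k satisfies: (d/dt) h(t,y) =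 (𝓛^{dual} h(t,·))(y) for all y ∈ Y^N_k and t ≥ 0; h(t,y) = 0 whenever y_0 > 0; and h(0,y) = h_0(y). -/
/-!
STATEMENT 4: a solution of the free evolution equations with the k−1 boundary and
k−1 cumulative conditions restricts (via `y ↦ n(y)`) to a solution of the true
evolution equations.
-/

/-- `([∇_a]_i u)(n) = a_{n_i} (u(n with n_i−1) − u(n))`, applied in the i-th coordinate. -/
noncomputable def gradOp (k : ℕ) (a : ℕ → ℝ) (u : (Fin k → ℕ) → ℝ)
    (i : Fin k) (n : Fin k → ℕ) : ℝ :=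
  a (n i) * (u (Function.update n i (n i - 1)) - u n)

/-- `([∇_a^{-1}] u)(n) = −Σ_{j=1}^{n} a_j⁻¹ u(j)`, applied in the i-th coordinate. -/
noncomputable def gradInv (k : ℕ) (a : ℕ → ℝ) (u : (Fin k → ℕ) → ℝ)
    (i : Fin k) (n : Fin k → ℕ) : ℝ :=
  -(∑ j ∈ Finset.Icc 1 (n i), (a j)⁻¹ * u (Function.update n i j))

/-- `y^{j,i}`: `y` with `y_j` decreased by 1 and `y_i` increased by 1 (`y^{i,i} = y`). -/
def ymoveN (y : ℕ → ℕ) (j i : ℕ) : ℕ → ℕ :=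
  fun m => if i = j then y m else if m = j then y m - 1 else if m = i then y m + 1 else y m

/-- The dual operator `𝓛^{dual}`. -/
noncomputable def genDualN (N : ℕ) (q : ℝ) (a : ℕ → ℝ) (R L : ℝ)
    (g : (ℕ → ℕ) → ℝ) (y : ℕ → ℕ) : ℝ :=
  (∑ i ∈ Finset.Icc 1 N, R * a i * (1 - q ^ (y i)) * (g (ymoveN y i (i-1)) - g y))
  + ∑ i ∈ Finset.Icc 1 N, L * (a i)⁻¹ *
      ∑ j ∈ Finset.Icc i N,
        (q ^ (-(y j : ℤ)) - 1) * q ^ (-(∑ m ∈ Finset.Ico i j, (y m : ℤ))) * g (ymoveN y j i)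

/-- Membership in `Y^N_k`: `y` is supported on `{0,…,N}` and `Σ y_i = k`. -/
def YNk (N k : ℕ) (y : ℕ → ℕ) : Prop :=
  (∀ m, N < m → y m = 0) ∧ (∑ m ∈ Finset.range (N+1), y m) = k

/-- `n(y)`: the weakly decreasing vector in `ℤ_{≥0}^k` containing each value `v`
with multiplicity `y_v`; its r-th coordinate (0-based `r`) is the largest `v ≤ N`
with `y_v + y_{v+1} + … + y_N ≥ r+1`. -/
def nOf (N k : ℕ) (y : ℕ → ℕ) : Fin k → ℕ :=
  fun r => ((Finset.range (N+1)).filter fun v => r.1 + 1 ≤ ∑ m ∈ Finset.Icc v N, y m).sup id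

def cumY (N : ℕ) (y : ℕ → ℕ) (v : ℕ) : ℕ := ∑ m ∈ Finset.Icc v N, y m

/-- the intermediate vector: `n` with entries in positions `[cumY s - 1, p)` shifted left. -/
def wvec (N k : ℕ) (y : ℕ → ℕ) (s p : ℕ) : Fin k → ℕ :=
  fun r => if h : cumY N y s - 1 ≤ r.1 ∧ r.1 + 1 < k ∧ r.1 < p
    then nOf N k y ⟨r.1+1, h.2.1⟩ else nOf N k y r

namespace Work

lemma cumY_def (N : ℕ) (y : ℕ → ℕ) (v : ℕ) :
    (∑ m ∈ Finset.Icc v N, y m) = cumY N y v := rfl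

lemma cum_anti {N : ℕ} {y : ℕ → ℕ} {v w : ℕ} (h : v ≤ w) : cumY N y w ≤ cumY N y v :=
  Finset.sum_le_sum_of_subset (Finset.Icc_subset_Icc_left h)

lemma cum_zero {N k : ℕ} {y : ℕ → ℕ} (hy : YNk N k y) : cumY N y 0 = k := by
  have : Finset.Icc 0 N = Finset.range (N+1) := by
    rw [Finset.range_eq_Ico, Finset.Ico_add_one_right_eq_Icc]
  rw [cumY, this, hy.2]

lemma cum_gt {N : ℕ} {y : ℕ → ℕ} {v : ℕ} (h : N < v) : cumY N y v = 0 := by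
  rw [cumY, Finset.Icc_eq_empty (by omega), Finset.sum_empty]

lemma cum_succ {N : ℕ} {y : ℕ → ℕ} {v : ℕ} (h : v ≤ N) :
    cumY N y v = y v + cumY N y (v+1) := by
  rw [cumY, cumY, ← Finset.Ico_add_one_right_eq_Icc, ← Finset.Ico_add_one_right_eq_Icc,
    Finset.sum_eq_sum_Ico_succ_bot (by omega)]

lemma cum_le_k {N k : ℕ} {y : ℕ → ℕ} (hy : YNk N k y) (v : ℕ) : cumY N y v ≤ k := by
  rw [← cum_zero hy]; exact cum_anti (Nat.zero_le _)

lemma cum_one {N k : ℕ} {y : ℕ → ℕ} (hy : YNk N k y) (hN : 1 ≤ N) (h0 : y 0 = 0) :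
    cumY N y 1 = k := by
  have h1 := cum_zero hy
  rw [cum_succ (by omega)] at h1
  norm_num at h1; omega

/-- characterization : value at r is v if r is in the cluster window. -/
lemma nOf_eq {N k : ℕ} {y : ℕ → ℕ} {v : ℕ} (hv : v ≤ N) (r : Fin k)
    (h1 : cumY N y (v+1) ≤ r.1) (h2 : r.1 < cumY N y v) : nOf N k y r = v := by
  unfold nOf
  apply le_antisymm
  · apply Finset.sup_le
    intro w hw
    simp only [Finset.mem_filter, Finset.mem_range] at hw
    simp only [cumY_def] at hw
    simp only [id_eq]
    by_contra hcon
    have hwv : cumY N y w ≤ cumY N y (v+1) := cum_anti (by omega)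
    omega
  · apply Finset.le_sup (f := id)
    simp only [Finset.mem_filter, Finset.mem_range]
    simp only [cumY_def]
    exact ⟨by omega, by omega⟩

lemma nOf_ge {N k : ℕ} {y : ℕ → ℕ} {v : ℕ} (hv : v ≤ N) (r : Fin k)
    (h2 : r.1 < cumY N y v) : v ≤ nOf N k y r := by
  apply Finset.le_sup (f := id)
  simp only [Finset.mem_filter, Finset.mem_range]
  simp only [cumY_def]
  exact ⟨by omega, by omega⟩

lemma nOf_spec {N k : ℕ} {y : ℕ → ℕ} (hy : YNk N k y) (r : Fin k) :
    nOf N k y r ≤ N ∧ r.1 < cumY N y (nOf N k y r) ∧ cumY N y (nOf N k y r + 1) ≤ r.1 := by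
  set s := (Finset.range (N+1)).filter fun v => r.1 + 1 ≤ ∑ m ∈ Finset.Icc v N, y m with hs
  have hne : s.Nonempty := by
    refine ⟨0, ?_⟩
    simp only [hs, Finset.mem_filter, Finset.mem_range]
    simp only [cumY_def]
    have := cum_zero hy
    have := r.2
    constructor
    · omega
    · omega
  obtain ⟨b, hb, hbe⟩ := Finset.exists_mem_eq_sup s hne id
  have hval : nOf N k y r = b := hbe
  simp only [hs, Finset.mem_filter, Finset.mem_range] at hb
  simp only [cumY_def] at hb
  refine ⟨by omega, ?_, ?_⟩
  · rw [hval]; omega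
  · rw [hval]
    by_cases hbN : b + 1 ≤ N
    · by_contra hcon
      have hmem : b + 1 ∈ s := by
        simp only [hs, Finset.mem_filter, Finset.mem_range]
        simp only [cumY_def]
        exact ⟨by omega, by omega⟩
      have hle := Finset.le_sup (f := id) hmem
      rw [hbe] at hle
      simp only [id] at hle; omega
    · have : N < b + 1 := by omega
      rw [cum_gt this]; omega


lemma ymove_self (y : ℕ → ℕ) (j : ℕ) : ymoveN y j j = y := by
  funext m; simp [ymoveN]

lemma cum_move {N : ℕ} {y : ℕ → ℕ} {i j : ℕ} (hij : i < j) (hjN : j ≤ N) (hyj : 1 ≤ y j)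
    (w : ℕ) :
    cumY N (ymoveN y j i) w + (if w ≤ j then 1 else 0)
      = cumY N y w + (if w ≤ i then 1 else 0) := by
  have h1 : (∑ m ∈ Finset.Icc w N, (ymoveN y j i m + if m = j then 1 else 0))
      = ∑ m ∈ Finset.Icc w N, (y m + if m = i then 1 else 0) := by
    apply Finset.sum_congr rfl
    intro m _
    have hij' : ¬ i = j := by omega
    simp only [ymoveN, if_neg hij']
    by_cases hmj : m = j
    · subst hmj; split_ifs <;> omega
    · rw [if_neg hmj, if_neg hmj]; split_ifs <;> omega
  rw [Finset.sum_add_distrib, Finset.sum_add_distrib] at h1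
  rw [Finset.sum_ite_eq' (Finset.Icc w N) j (fun _ => 1),
    Finset.sum_ite_eq' (Finset.Icc w N) i (fun _ => 1)] at h1
  simp only [Finset.mem_Icc, cumY_def] at h1
  split_ifs at h1 ⊢ <;> omega

lemma sum_range_eq_cum {N : ℕ} (y : ℕ → ℕ) :
    (∑ m ∈ Finset.range (N+1), y m) = cumY N y 0 := by
  rw [cumY]
  congr 1
  rw [Finset.range_eq_Ico, Finset.Ico_add_one_right_eq_Icc]

lemma YNk_move {N k : ℕ} {y : ℕ → ℕ} (hy : YNk N k y) {i j : ℕ} (hij : i ≤ j) (hjN : j ≤ N)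
    (hyj : 1 ≤ y j) : YNk N k (ymoveN y j i) := by
  rcases Nat.lt_or_ge i j with hlt | hge
  · constructor
    · intro m hm
      simp only [ymoveN, if_neg (show ¬ i = j by omega), if_neg (show ¬ m = j by omega),
        if_neg (show ¬ m = i by omega)]
      exact hy.1 m hm
    · have h := cum_move hlt hjN hyj 0
      rw [if_pos (by omega), if_pos (by omega)] at h
      rw [sum_range_eq_cum]
      have := cum_zero hy
      omega
  · have : i = j := by omega
    subst this
    rw [ymove_self]
    exact hy

lemma nOf_move_down {N k : ℕ} {y : ℕ → ℕ} (hy : YNk N k y) (hk : 1 ≤ k) {i : ℕ}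
    (hi1 : 1 ≤ i) (hiN : i ≤ N) (hyi : 1 ≤ y i) :
    nOf N k (ymoveN y i (i-1))
      = Function.update (nOf N k y) ⟨cumY N y i - 1, by have := cum_le_k hy i; omega⟩ (i-1) := by
  have hcm := fun w => cum_move (show i-1 < i by omega) hiN hyi w
  have hci : 1 ≤ cumY N y i := by rw [cum_succ hiN]; omega
  have hc' : ∀ w, cumY N (ymoveN y i (i-1)) w = cumY N y w - (if w = i then 1 else 0) := by
    intro w
    have h := hcm w
    have hmono : w ≤ i → cumY N y i ≤ cumY N y w := fun hh => cum_anti hh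
    by_cases hwi : w = i
    · subst hwi
      rw [if_pos rfl]
      split_ifs at h <;> omega
    · rw [if_neg hwi]
      split_ifs at h <;> omega
  funext r
  rw [Function.update_apply]
  split_ifs with hr
  · have hr1 : r.1 = cumY N y i - 1 := by rw [hr]
    apply nOf_eq (show i - 1 ≤ N by omega) r
    · have h1 := hc' (i-1+1)
      rw [show i - 1 + 1 = i by omega] at h1
      rw [show i - 1 + 1 = i by omega, h1, if_pos rfl]
      omega
    · rw [hc' (i-1), if_neg (by omega)]
      have : cumY N y i ≤ cumY N y (i-1) := cum_anti (by omega)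
      omega
  · obtain ⟨hvN, hrlt, hrge⟩ := nOf_spec hy r
    have hrne : r.1 ≠ cumY N y i - 1 := fun h => hr (Fin.ext h)
    apply nOf_eq hvN r
    · rw [hc' (nOf N k y r + 1)]
      split_ifs <;> omega
    · rw [hc' (nOf N k y r)]
      by_cases hvi : nOf N k y r = i
      · rw [if_pos hvi]
        have h1 : cumY N y (nOf N k y r) = cumY N y i := by rw [hvi]
        omega
      · rw [if_neg hvi]
        omega


lemma wvec_base {N k : ℕ} (y : ℕ → ℕ) (s : ℕ) :
    wvec N k y s (cumY N y s - 1) = nOf N k y := by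
  funext r
  rw [wvec, dif_neg (by omega)]

lemma nOf_move {N k : ℕ} {y : ℕ → ℕ} (hy : YNk N k y) (hk : 1 ≤ k) {d s : ℕ}
    (hd : 1 ≤ d) (hds : d ≤ s) (hsN : s ≤ N) (hys : 1 ≤ y s) :
    nOf N k (ymoveN y s d)
      = Function.update (wvec N k y s (cumY N y d - 1))
          ⟨cumY N y d - 1, by have := cum_le_k hy d; omega⟩ d := by
  have hcs1 : 1 ≤ cumY N y s := by rw [cum_succ hsN]; omega
  have hsd : cumY N y s ≤ cumY N y d := cum_anti hds
  have hdk : cumY N y d ≤ k := cum_le_k hy d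
  rcases Nat.eq_or_lt_of_le hds with heq | hlt
  · subst heq
    rw [ymove_self, wvec_base]
    funext r
    rw [Function.update_apply]
    split_ifs with hr
    · have hr1 : r.1 = cumY N y d - 1 := by rw [hr]
      have := cum_succ (y := y) hsN
      exact nOf_eq hsN r (by omega) (by omega)
    · rfl
  · have hcm := fun w => cum_move hlt hsN hys w
    have hc'le : ∀ w, cumY N (ymoveN y s d) w ≤ cumY N y w := by
      intro w; have h := hcm w; split_ifs at h <;> omega
    funext r
    rw [Function.update_apply]
    split_ifs with hr
    · have hr1 : r.1 = cumY N y d - 1 := by rw [hr]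
      apply nOf_eq (show d ≤ N by omega) r
      · have h := hcm (d+1)
        rw [if_pos (by omega), if_neg (by omega)] at h
        have h2 : cumY N y (d+1) ≤ cumY N y d := cum_anti (by omega)
        omega
      · have h := hcm d
        rw [if_pos (by omega), if_pos (by omega)] at h
        omega
    · have hr1 : r.1 ≠ cumY N y d - 1 := fun h => hr (Fin.ext h)
      rw [wvec]
      by_cases hw : cumY N y s - 1 ≤ r.1 ∧ r.1 + 1 < k ∧ r.1 < cumY N y d - 1
      · rw [dif_pos hw]
        obtain ⟨hvN, hlt2, hge2⟩ := nOf_spec hy (⟨r.1+1, hw.2.1⟩ : Fin k)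
        have hval : ((⟨r.1+1, hw.2.1⟩ : Fin k) : ℕ) = r.1+1 := rfl
        set v := nOf N k y (⟨r.1+1, hw.2.1⟩ : Fin k) with hvdef
        have hvd : d ≤ v := nOf_ge (by omega) _ (by omega)
        have hvs : v < s := by
          by_contra hcon
          have : cumY N y v ≤ cumY N y s := cum_anti (by omega)
          omega
        apply nOf_eq hvN r
        · have h := hcm (v+1)
          rw [if_pos (by omega), if_neg (by omega)] at h
          omega
        · have h := hcm v
          by_cases hvd' : v = d
          · rw [if_pos (by omega), if_pos (by omega)] at h
            omega
          · rw [if_pos (by omega), if_neg (by omega)] at h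
            omega
      · rw [dif_neg hw]
        obtain ⟨hvN, hlt2, hge2⟩ := nOf_spec hy r
        set v := nOf N k y r with hvdef
        have hcases : r.1 < cumY N y s - 1 ∨ cumY N y d ≤ r.1 := by
          rcases Nat.lt_or_ge r.1 (cumY N y s - 1) with h | h
          · left; exact h
          · right
            by_contra hcon
            exact hw ⟨by omega, by omega, by omega⟩
        rcases hcases with hcase | hcase
        · have hvs : s ≤ v := nOf_ge hsN r (by omega)
          apply nOf_eq hvN r
          · have h := hcm (v+1)
            rw [if_neg (by omega), if_neg (by omega)] at h
            omega
          · have h := hcm v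
            by_cases hvs' : v = s
            · rw [if_pos (by omega), if_neg (by omega)] at h
              have h2 : cumY N y v = cumY N y s := by rw [hvs']
              omega
            · rw [if_neg (by omega), if_neg (by omega)] at h
              omega
        · have hvd : v < d := by
            by_contra hcon
            have := cum_anti (y := y) (N := N) (show d ≤ v by omega)
            omega
          apply nOf_eq hvN r
          · have := hc'le (v+1)
            have : cumY N y (v+1) ≤ r.1 := hge2
            have := hc'le (v+1)
            omega
          · have h := hcm v
            rw [if_pos (by omega), if_pos (by omega)] at h
            omega


/-- the moving sum -/
noncomputable def Ssum (N k : ℕ) (a : ℕ → ℝ) (y : ℕ → ℕ) (s : ℕ)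
    (f : (Fin k → ℕ) → ℝ) (p b : ℕ) : ℝ :=
  if hp : p < k then
    ∑ j ∈ Finset.Icc 1 b, (a j)⁻¹ * f (Function.update (wvec N k y s p) ⟨p, hp⟩ j)
  else 0

lemma Ssum_eq {N k : ℕ} (a : ℕ → ℝ) (y : ℕ → ℕ) (s : ℕ) (f : (Fin k → ℕ) → ℝ)
    {p : ℕ} (b : ℕ) (hp : p < k) :
    Ssum N k a y s f p b
      = ∑ j ∈ Finset.Icc 1 b, (a j)⁻¹ * f (Function.update (wvec N k y s p) ⟨p, hp⟩ j) :=
  dif_pos hp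

/-- one-step transport of the moving sum past one site. -/
lemma Ssum_step {N k : ℕ} {q : ℝ} {a : ℕ → ℝ} {y : ℕ → ℕ} {s : ℕ}
    {f : (Fin k → ℕ) → ℝ}
    (hb1 : ∀ (n : Fin k → ℕ) (i : Fin k) (h : i.1+1 < k), n i = n ⟨i.1+1, h⟩ →
      gradInv k a f i n - q⁻¹ * gradInv k a f ⟨i.1+1, h⟩ n = 0)
    {p : ℕ} (hp1 : cumY N y s - 1 ≤ p) (hpk : p + 1 < k) :
    Ssum N k a y s f p (nOf N k y ⟨p+1, hpk⟩)
      = q⁻¹ * Ssum N k a y s f (p+1) (nOf N k y ⟨p+1, hpk⟩) := by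
  have hpk' : p < k := by omega
  set b := nOf N k y ⟨p+1, hpk⟩ with hbdef
  set W := Function.update (wvec N k y s p) ⟨p, hpk'⟩ b with hWdef
  have hWp : W ⟨p, hpk'⟩ = b := Function.update_self _ _ _
  have hWp1 : W ⟨p+1, hpk⟩ = b := by
    rw [hWdef, Function.update_of_ne (by simp [Fin.ext_iff]), wvec,
      dif_neg (show ¬(cumY N y s - 1 ≤ p+1 ∧ p+1+1 < k ∧ p+1 < p) by omega), hbdef]
  have key := hb1 W ⟨p, hpk'⟩ hpk (by
    show W ⟨p, hpk'⟩ = W ⟨p+1, hpk⟩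
    rw [hWp, hWp1])
  rw [gradInv, gradInv] at key
  have hWpval : W (⟨p, hpk'⟩ : Fin k) = b := hWp
  have hWp1val : W (⟨(⟨p, hpk'⟩ : Fin k).1 + 1, hpk⟩ : Fin k) = b := hWp1
  rw [hWpval, hWp1val] at key
  have hS1 : (∑ j ∈ Finset.Icc 1 b, (a j)⁻¹ * f (Function.update W ⟨p, hpk'⟩ j))
      = ∑ j ∈ Finset.Icc 1 b, (a j)⁻¹ * f (Function.update (wvec N k y s p) ⟨p, hpk'⟩ j) := by
    apply Finset.sum_congr rfl
    intro j _
    rw [hWdef, Function.update_idem]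
  have hS2 : (∑ j ∈ Finset.Icc 1 b,
        (a j)⁻¹ * f (Function.update W ⟨(⟨p, hpk'⟩ : Fin k).1 + 1, hpk⟩ j))
      = ∑ j ∈ Finset.Icc 1 b, (a j)⁻¹ * f (Function.update (wvec N k y s (p+1)) ⟨p+1, hpk⟩ j) := by
    apply Finset.sum_congr rfl
    intro j _
    have hupd : Function.update W ⟨(⟨p, hpk'⟩ : Fin k).1 + 1, hpk⟩ j
        = Function.update (wvec N k y s (p+1)) ⟨p+1, hpk⟩ j := by
      funext r
      rcases eq_or_ne r (⟨p+1, hpk⟩ : Fin k) with rfl | hne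
      · simp only [show ((⟨(⟨p, hpk'⟩ : Fin k).1 + 1, hpk⟩ : Fin k)) = (⟨p+1, hpk⟩ : Fin k) from rfl,
          Function.update_self]
      · rw [Function.update_of_ne (fun h => hne h),
          Function.update_of_ne hne, hWdef]
        rcases eq_or_ne r (⟨p, hpk'⟩ : Fin k) with rfl | hne1
        · rw [Function.update_self, wvec, dif_pos (show cumY N y s - 1 ≤ (⟨p, hpk'⟩ : Fin k).1
              ∧ (⟨p, hpk'⟩ : Fin k).1 + 1 < k ∧ (⟨p, hpk'⟩ : Fin k).1 < p + 1 from ⟨hp1, hpk, Nat.lt_succ_self p⟩)]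
        · rw [Function.update_of_ne hne1, wvec, wvec]
          have hrp : r.1 ≠ p := fun h => hne1 (Fin.ext h)
          by_cases hc : cumY N y s - 1 ≤ r.1 ∧ r.1 + 1 < k ∧ r.1 < p
          · rw [dif_pos hc, dif_pos ⟨hc.1, hc.2.1, by omega⟩]
          · rw [dif_neg hc, dif_neg (show ¬(cumY N y s - 1 ≤ r.1 ∧ r.1 + 1 < k ∧ r.1 < p + 1) by omega)]
    rw [hupd]
  rw [hS1, hS2] at key
  rw [Ssum_eq a y s f b hpk', Ssum_eq a y s f b hpk]
  linarith

lemma Ssum_cluster {N k : ℕ} {q : ℝ} {a : ℕ → ℝ} {y : ℕ → ℕ} {s : ℕ}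
    {f : (Fin k → ℕ) → ℝ}
    (hb1 : ∀ (n : Fin k → ℕ) (i : Fin k) (h : i.1+1 < k), n i = n ⟨i.1+1, h⟩ →
      gradInv k a f i n - q⁻¹ * gradInv k a f ⟨i.1+1, h⟩ n = 0)
    (hy : YNk N k y) (hk : 1 ≤ k) {v : ℕ} (hv1 : 1 ≤ v) (hvs : v + 1 ≤ s) (hsN : s ≤ N)
    (hys : 1 ≤ y s) :
    Ssum N k a y s f (cumY N y (v+1) - 1) v
      = q⁻¹ ^ (y v) * Ssum N k a y s f (cumY N y v - 1) v := by
  have hcs : 1 ≤ cumY N y s := by rw [cum_succ hsN]; omega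
  have hcv1 : 1 ≤ cumY N y (v+1) := le_trans hcs (cum_anti hvs)
  have hcsv : cumY N y s ≤ cumY N y (v+1) := cum_anti hvs
  have hsplit : cumY N y v = y v + cumY N y (v+1) := cum_succ (by omega)
  have hvk : cumY N y v ≤ k := cum_le_k hy v
  have aux : ∀ m, m ≤ y v →
      Ssum N k a y s f (cumY N y v - 1 - m) v = q⁻¹ ^ m * Ssum N k a y s f (cumY N y v - 1) v := by
    intro m hm
    induction m with
    | zero => simp
    | succ m ih =>
      have ihm := ih (by omega)
      have hp1k : (cumY N y v - 1 - (m+1)) + 1 < k := by omega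
      have hval : nOf N k y ⟨(cumY N y v - 1 - (m+1)) + 1, hp1k⟩ = v := by
        have hb1' : cumY N y (v+1) ≤ cumY N y v - 1 - (m+1) + 1 := by omega
        have hb2' : cumY N y v - 1 - (m+1) + 1 < cumY N y v := by omega
        exact nOf_eq (by omega) _ hb1' hb2'
      have hstep := Ssum_step (N := N) (y := y) (s := s) hb1
        (show cumY N y s - 1 ≤ cumY N y v - 1 - (m+1) by omega) hp1k
      rw [hval] at hstep
      rw [show cumY N y v - 1 - (m+1) + 1 = cumY N y v - 1 - m by omega] at hstep
      rw [hstep, ihm]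
      ring
  have := aux (y v) le_rfl
  rw [show cumY N y v - 1 - y v = cumY N y (v+1) - 1 by omega] at this
  exact this

lemma Ssum_main {N k : ℕ} {q : ℝ} {a : ℕ → ℝ} {y : ℕ → ℕ} {s : ℕ}
    {f : (Fin k → ℕ) → ℝ}
    (hb1 : ∀ (n : Fin k → ℕ) (i : Fin k) (h : i.1+1 < k), n i = n ⟨i.1+1, h⟩ →
      gradInv k a f i n - q⁻¹ * gradInv k a f ⟨i.1+1, h⟩ n = 0)
    (hy : YNk N k y) (hk : 1 ≤ k) (hq : q ≠ 0) (hsN : s ≤ N) (hys : 1 ≤ y s) :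
    ∀ v, 1 ≤ v → v ≤ s →
    Ssum N k a y s f (cumY N y v - 1) v
      = ∑ d ∈ Finset.Icc 1 v, (a d)⁻¹ * (q ^ (-(∑ m ∈ Finset.Ico d v, (y m : ℤ))))
          * f (nOf N k (ymoveN y s d)) := by
  have hcs : 1 ≤ cumY N y s := by rw [cum_succ hsN]; omega
  refine Nat.le_induction ?_ ?_
  · intro h1s
    have hc1k : cumY N y 1 - 1 < k := by have := cum_le_k hy 1; omega
    rw [Ssum_eq a y s f 1 hc1k]
    rw [Finset.Icc_self, Finset.sum_singleton, Finset.sum_singleton]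
    rw [Finset.Ico_self, Finset.sum_empty, neg_zero, zpow_zero]
    rw [nOf_move hy hk le_rfl h1s hsN hys, mul_one]
  · intro v hv1 ih hv1s
    have hvs : v ≤ s := by omega
    have ihv := ih hvs
    have hcvk : cumY N y v - 1 < k := by have := cum_le_k hy v; omega
    have hcv1k : cumY N y (v+1) - 1 < k := by have := cum_le_k hy (v+1); omega
    rw [Ssum_eq a y s f (v+1) hcv1k, Finset.sum_Icc_succ_top (by omega : 1 ≤ v + 1),
      ← Ssum_eq a y s f v hcv1k]
    rw [Ssum_cluster hb1 hy hk hv1 hv1s hsN hys, ihv]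
    rw [← nOf_move hy hk (by omega : 1 ≤ v + 1) hv1s hsN hys]
    rw [Finset.sum_Icc_succ_top (by omega : 1 ≤ v + 1)]
    have hpow : q⁻¹ ^ (y v) = q ^ (-(y v : ℤ)) := by
      rw [inv_pow, ← zpow_natCast q (y v), ← zpow_neg]
    rw [hpow, Finset.mul_sum]
    congr 1
    · apply Finset.sum_congr rfl
      intro d hd
      simp only [Finset.mem_Icc] at hd
      rw [Finset.sum_Ico_succ_top (by omega : d ≤ v), neg_add, zpow_add₀ hq]
      ring
    · rw [Finset.Ico_self, Finset.sum_empty, neg_zero, zpow_zero]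
      ring


/-- left-anchored geometric summation. -/
lemma geom_left (q G : ℝ) (g : ℕ → ℝ) (B : ℕ) :
    ∀ d A, A + d = B → (∀ t, A ≤ t → t < B → g t = q^(B-1-t) * G) →
    (∑ t ∈ Finset.Ico A B, g t) = (∑ m ∈ Finset.range d, q^m) * G := by
  intro d
  induction d with
  | zero =>
    intro A hA _
    rw [show A = B by omega, Finset.Ico_self, Finset.sum_empty, Finset.range_zero,
      Finset.sum_empty, zero_mul]
  | succ d ih =>
    intro A hA hg
    rw [Finset.sum_eq_sum_Ico_succ_bot (by omega : A < B)]
    rw [ih (A+1) (by omega) (fun t ht1 ht2 => hg t (by omega) ht2)]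
    rw [hg A (le_refl A) (by omega), show B - 1 - A = d by omega, Finset.sum_range_succ]
    ring

lemma one_sub_geom (q : ℝ) (n : ℕ) : (1 - q) * (∑ m ∈ Finset.range n, q^m) = 1 - q^n := by
  have h := geom_sum_mul q n
  linear_combination -h

/-- chain within a cluster for gradOp. -/
lemma gradOp_chain {N k : ℕ} {q : ℝ} {a : ℕ → ℝ} {y : ℕ → ℕ} {f : (Fin k → ℕ) → ℝ}
    (hb2 : ∀ (n : Fin k → ℕ) (i : Fin k) (h : i.1+1 < k), n i = n ⟨i.1+1, h⟩ → 1 ≤ n i →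
      gradOp k a f i n - q * gradOp k a f ⟨i.1+1, h⟩ n = 0)
    (hy : YNk N k y) (hk : 1 ≤ k) {v : ℕ} (hv1 : 1 ≤ v) (hvN : v ≤ N)
    (hlast : cumY N y v - 1 < k) :
    ∀ m, m < y v →
      (∀ h : cumY N y v - 1 - m < k,
        gradOp k a f ⟨cumY N y v - 1 - m, h⟩ (nOf N k y)
          = q^m * gradOp k a f ⟨cumY N y v - 1, hlast⟩ (nOf N k y)) := by
  have hsplit : cumY N y v = y v + cumY N y (v+1) := cum_succ hvN
  intro m
  induction m with
  | zero =>
    intro _ h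
    rw [show (⟨cumY N y v - 1 - 0, h⟩ : Fin k) = ⟨cumY N y v - 1, hlast⟩ from
      Fin.ext (by show cumY N y v - 1 - 0 = cumY N y v - 1; omega)]
    rw [pow_zero, one_mul]
  | succ m ih =>
    intro hm h
    have hm' : m < y v := by omega
    have ht1k : (cumY N y v - 1 - (m+1)) + 1 < k := by omega
    have hval1 : nOf N k y ⟨cumY N y v - 1 - (m+1), h⟩ = v := by
      have b1 : cumY N y (v+1) ≤ cumY N y v - 1 - (m+1) := by omega
      have b2 : cumY N y v - 1 - (m+1) < cumY N y v := by omega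
      exact nOf_eq hvN _ b1 b2
    have hval2 : nOf N k y ⟨(cumY N y v - 1 - (m+1)) + 1, ht1k⟩ = v := by
      have b1 : cumY N y (v+1) ≤ (cumY N y v - 1 - (m+1)) + 1 := by omega
      have b2 : (cumY N y v - 1 - (m+1)) + 1 < cumY N y v := by omega
      exact nOf_eq hvN _ b1 b2
    have hstep := hb2 (nOf N k y) ⟨cumY N y v - 1 - (m+1), h⟩ ht1k
      (by rw [hval1]; rw [show nOf N k y ⟨(⟨cumY N y v - 1 - (m+1), h⟩ : Fin k).1 + 1, ht1k⟩
            = nOf N k y ⟨(cumY N y v - 1 - (m+1)) + 1, ht1k⟩ from rfl, hval2])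
      (by rw [hval1]; omega)
    have hne : (⟨(⟨cumY N y v - 1 - (m+1), h⟩ : Fin k).1 + 1, ht1k⟩ : Fin k)
        = ⟨cumY N y v - 1 - m, by omega⟩ := Fin.ext (by
          show (cumY N y v - 1 - (m+1)) + 1 = cumY N y v - 1 - m; omega)
    rw [hne] at hstep
    rw [ih hm' (by omega)] at hstep
    have : gradOp k a f ⟨cumY N y v - 1 - (m+1), h⟩ (nOf N k y)
        = q * (q^m * gradOp k a f ⟨cumY N y v - 1, hlast⟩ (nOf N k y)) := by linarith
    rw [this]; ring

/-- chain within a cluster for gradInv. -/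
lemma gradInv_chain {N k : ℕ} {q : ℝ} {a : ℕ → ℝ} {y : ℕ → ℕ} {f : (Fin k → ℕ) → ℝ}
    (hb1 : ∀ (n : Fin k → ℕ) (i : Fin k) (h : i.1+1 < k), n i = n ⟨i.1+1, h⟩ →
      gradInv k a f i n - q⁻¹ * gradInv k a f ⟨i.1+1, h⟩ n = 0)
    (hy : YNk N k y) (hk : 1 ≤ k) {v : ℕ} (hv1 : 1 ≤ v) (hvN : v ≤ N)
    (hlast : cumY N y v - 1 < k) :
    ∀ m, m < y v →
      (∀ h : cumY N y v - 1 - m < k,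
        gradInv k a f ⟨cumY N y v - 1 - m, h⟩ (nOf N k y)
          = q⁻¹^m * gradInv k a f ⟨cumY N y v - 1, hlast⟩ (nOf N k y)) := by
  have hsplit : cumY N y v = y v + cumY N y (v+1) := cum_succ hvN
  intro m
  induction m with
  | zero =>
    intro _ h
    rw [show (⟨cumY N y v - 1 - 0, h⟩ : Fin k) = ⟨cumY N y v - 1, hlast⟩ from
      Fin.ext (by show cumY N y v - 1 - 0 = cumY N y v - 1; omega)]
    rw [pow_zero, one_mul]
  | succ m ih =>
    intro hm h
    have hm' : m < y v := by omega
    have ht1k : (cumY N y v - 1 - (m+1)) + 1 < k := by omega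
    have hval1 : nOf N k y ⟨cumY N y v - 1 - (m+1), h⟩ = v := by
      have b1 : cumY N y (v+1) ≤ cumY N y v - 1 - (m+1) := by omega
      have b2 : cumY N y v - 1 - (m+1) < cumY N y v := by omega
      exact nOf_eq hvN _ b1 b2
    have hval2 : nOf N k y ⟨(cumY N y v - 1 - (m+1)) + 1, ht1k⟩ = v := by
      have b1 : cumY N y (v+1) ≤ (cumY N y v - 1 - (m+1)) + 1 := by omega
      have b2 : (cumY N y v - 1 - (m+1)) + 1 < cumY N y v := by omega
      exact nOf_eq hvN _ b1 b2
    have hstep := hb1 (nOf N k y) ⟨cumY N y v - 1 - (m+1), h⟩ ht1k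
      (by rw [hval1]; rw [show nOf N k y ⟨(⟨cumY N y v - 1 - (m+1), h⟩ : Fin k).1 + 1, ht1k⟩
            = nOf N k y ⟨(cumY N y v - 1 - (m+1)) + 1, ht1k⟩ from rfl, hval2])
    have hne : (⟨(⟨cumY N y v - 1 - (m+1), h⟩ : Fin k).1 + 1, ht1k⟩ : Fin k)
        = ⟨cumY N y v - 1 - m, by omega⟩ := Fin.ext (by
          show (cumY N y v - 1 - (m+1)) + 1 = cumY N y v - 1 - m; omega)
    rw [hne] at hstep
    rw [ih hm' (by omega)] at hstep
    have : gradInv k a f ⟨cumY N y v - 1 - (m+1), h⟩ (nOf N k y)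
        = q⁻¹ * (q⁻¹^m * gradInv k a f ⟨cumY N y v - 1, hlast⟩ (nOf N k y)) := by linarith
    rw [this]; ring


lemma cluster_gradOp {N k : ℕ} {q : ℝ} {a : ℕ → ℝ} {y : ℕ → ℕ} {f : (Fin k → ℕ) → ℝ}
    (hb2 : ∀ (n : Fin k → ℕ) (i : Fin k) (h : i.1+1 < k), n i = n ⟨i.1+1, h⟩ → 1 ≤ n i →
      gradOp k a f i n - q * gradOp k a f ⟨i.1+1, h⟩ n = 0)
    (hy : YNk N k y) (hk : 1 ≤ k) {v : ℕ} (hv1 : 1 ≤ v) (hvN : v ≤ N) :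
    (1 - q) * (∑ t ∈ Finset.Ico (cumY N y (v+1)) (cumY N y v),
        (if h : t < k then gradOp k a f ⟨t,h⟩ (nOf N k y) else 0))
      = a v * (1 - q^(y v)) * (f (nOf N k (ymoveN y v (v-1))) - f (nOf N k y)) := by
  have hsplit : cumY N y v = y v + cumY N y (v+1) := cum_succ hvN
  by_cases hyv : y v = 0
  · rw [show cumY N y v = cumY N y (v+1) by omega, Finset.Ico_self, Finset.sum_empty,
      hyv, pow_zero]
    ring
  · have hvk : cumY N y v ≤ k := cum_le_k hy v
    have hlast : cumY N y v - 1 < k := by omega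
    have hvaln : nOf N k y ⟨cumY N y v - 1, hlast⟩ = v :=
      nOf_eq hvN _ (show cumY N y (v+1) ≤ cumY N y v - 1 by omega)
        (show cumY N y v - 1 < cumY N y v by omega)
    have hgeom := geom_left q (gradOp k a f ⟨cumY N y v - 1, hlast⟩ (nOf N k y))
      (fun t => if h : t < k then gradOp k a f ⟨t,h⟩ (nOf N k y) else 0)
      (cumY N y v) (y v) (cumY N y (v+1)) (by omega)
      (by
        intro t ht1 ht2
        have htk : t < k := by omega
        show (if h : t < k then _ else (0:ℝ)) = _
        rw [dif_pos htk]
        have hch := gradOp_chain hb2 hy hk hv1 hvN hlast (cumY N y v - 1 - t)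
          (by omega) (show cumY N y v - 1 - (cumY N y v - 1 - t) < k by omega)
        rw [show (⟨cumY N y v - 1 - (cumY N y v - 1 - t), show cumY N y v - 1 - (cumY N y v - 1 - t) < k by omega⟩ : Fin k)
            = (⟨t, htk⟩ : Fin k) from Fin.ext (by show cumY N y v - 1 - (cumY N y v - 1 - t) = t; omega)] at hch
        exact hch)
    rw [hgeom, ← mul_assoc, one_sub_geom, gradOp, hvaln]
    rw [← nOf_move_down hy hk hv1 hvN (by omega)]
    ring

lemma cluster_gradInv {N k : ℕ} {q : ℝ} {a : ℕ → ℝ} {y : ℕ → ℕ} {f : (Fin k → ℕ) → ℝ}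
    (hb1 : ∀ (n : Fin k → ℕ) (i : Fin k) (h : i.1+1 < k), n i = n ⟨i.1+1, h⟩ →
      gradInv k a f i n - q⁻¹ * gradInv k a f ⟨i.1+1, h⟩ n = 0)
    (hy : YNk N k y) (hk : 1 ≤ k) (hq : q ≠ 0) {v : ℕ} (hv1 : 1 ≤ v) (hvN : v ≤ N) :
    (1 - q⁻¹) * (∑ t ∈ Finset.Ico (cumY N y (v+1)) (cumY N y v),
        (if h : t < k then gradInv k a f ⟨t,h⟩ (nOf N k y) else 0))
      = ∑ d ∈ Finset.Icc 1 v, (q ^ (-(y v : ℤ)) - 1) * (a d)⁻¹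
          * (q ^ (-(∑ m ∈ Finset.Ico d v, (y m : ℤ)))) * f (nOf N k (ymoveN y v d)) := by
  have hsplit : cumY N y v = y v + cumY N y (v+1) := cum_succ hvN
  have hpow : q⁻¹ ^ (y v) = q ^ (-(y v : ℤ)) := by
    rw [inv_pow, ← zpow_natCast q (y v), ← zpow_neg]
  by_cases hyv : y v = 0
  · rw [show cumY N y v = cumY N y (v+1) by omega, Finset.Ico_self, Finset.sum_empty]
    rw [hyv]
    simp
  · have hvk : cumY N y v ≤ k := cum_le_k hy v
    have hlast : cumY N y v - 1 < k := by omega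
    have hvaln : nOf N k y ⟨cumY N y v - 1, hlast⟩ = v :=
      nOf_eq hvN _ (show cumY N y (v+1) ≤ cumY N y v - 1 by omega)
        (show cumY N y v - 1 < cumY N y v by omega)
    have hgeom := geom_left q⁻¹ (gradInv k a f ⟨cumY N y v - 1, hlast⟩ (nOf N k y))
      (fun t => if h : t < k then gradInv k a f ⟨t,h⟩ (nOf N k y) else 0)
      (cumY N y v) (y v) (cumY N y (v+1)) (by omega)
      (by
        intro t ht1 ht2
        have htk : t < k := by omega
        show (if h : t < k then _ else (0:ℝ)) = _
        rw [dif_pos htk]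
        have hch := gradInv_chain hb1 hy hk hv1 hvN hlast (cumY N y v - 1 - t)
          (by omega) (show cumY N y v - 1 - (cumY N y v - 1 - t) < k by omega)
        rw [show (⟨cumY N y v - 1 - (cumY N y v - 1 - t), show cumY N y v - 1 - (cumY N y v - 1 - t) < k by omega⟩ : Fin k)
            = (⟨t, htk⟩ : Fin k) from Fin.ext (by show cumY N y v - 1 - (cumY N y v - 1 - t) = t; omega)] at hch
        exact hch)
    rw [hgeom, ← mul_assoc, one_sub_geom, gradInv, hvaln]
    rw [← wvec_base y v, ← Ssum_eq a y v f v hlast]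
    rw [Ssum_main hb1 hy hk hq hvN (by omega) v hv1 le_rfl]
    rw [mul_neg, ← neg_mul, Finset.mul_sum]
    apply Finset.sum_congr rfl
    intro d _
    rw [← hpow]
    ring


lemma partition {N k : ℕ} {y : ℕ → ℕ} (hy : YNk N k y) (hN : 1 ≤ N) (h0 : y 0 = 0)
    (g : ℕ → ℝ) :
    (∑ t ∈ Finset.range k, g t)
      = ∑ v ∈ Finset.Icc 1 N, ∑ t ∈ Finset.Ico (cumY N y (v+1)) (cumY N y v), g t := by
  have aux : ∀ M : ℕ,
      (∑ v ∈ Finset.Icc 1 M, ∑ t ∈ Finset.Ico (cumY N y (v+1)) (cumY N y v), g t)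
        = ∑ t ∈ Finset.Ico (cumY N y (M+1)) (cumY N y 1), g t := by
    intro M
    induction M with
    | zero =>
      rw [Finset.Icc_eq_empty (by omega), Finset.sum_empty, Finset.Ico_self, Finset.sum_empty]
    | succ M ih =>
      rw [Finset.sum_Icc_succ_top (by omega : 1 ≤ M + 1), ih, add_comm]
      exact Finset.sum_Ico_consecutive g (cum_anti (by omega)) (cum_anti (by omega))
  rw [aux N, cum_gt (by omega : N < N + 1), cum_one hy hN h0, ← Finset.range_eq_Ico]

lemma sum_swap_tri (N : ℕ) (F : ℕ → ℕ → ℝ) :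
    (∑ v ∈ Finset.Icc 1 N, ∑ d ∈ Finset.Icc 1 v, F v d)
      = ∑ d ∈ Finset.Icc 1 N, ∑ v ∈ Finset.Icc d N, F v d := by
  have h1 : ∀ v ∈ Finset.Icc 1 N,
      (∑ d ∈ Finset.Icc 1 v, F v d) = ∑ d ∈ Finset.Icc 1 N, if d ≤ v then F v d else 0 := by
    intro v hv
    simp only [Finset.mem_Icc] at hv
    rw [← Finset.sum_filter]
    congr 1
    ext d
    simp only [Finset.mem_Icc, Finset.mem_filter]
    omega
  rw [Finset.sum_congr rfl h1, Finset.sum_comm]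
  apply Finset.sum_congr rfl
  intro d hd
  simp only [Finset.mem_Icc] at hd
  rw [← Finset.sum_filter]
  congr 1
  ext v
  simp only [Finset.mem_Icc, Finset.mem_filter]
  omega

lemma main_identity {N k : ℕ} {q : ℝ} {a : ℕ → ℝ} {y : ℕ → ℕ} {f : (Fin k → ℕ) → ℝ}
    (hb1 : ∀ (n : Fin k → ℕ) (i : Fin k) (h : i.1+1 < k), n i = n ⟨i.1+1, h⟩ →
      gradInv k a f i n - q⁻¹ * gradInv k a f ⟨i.1+1, h⟩ n = 0)
    (hb2 : ∀ (n : Fin k → ℕ) (i : Fin k) (h : i.1+1 < k), n i = n ⟨i.1+1, h⟩ → 1 ≤ n i →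
      gradOp k a f i n - q * gradOp k a f ⟨i.1+1, h⟩ n = 0)
    (hy : YNk N k y) (h0 : y 0 = 0) (hN : 1 ≤ N) (hk : 1 ≤ k) (hq : q ≠ 0) (R L : ℝ) :
    R * (1 - q) * (∑ i : Fin k, gradOp k a f i (nOf N k y))
      + L * (1 - q⁻¹) * (∑ i : Fin k, gradInv k a f i (nOf N k y))
      = genDualN N q a R L (fun y' => f (nOf N k y')) y := by
  have hGop : (∑ i : Fin k, gradOp k a f i (nOf N k y))
      = ∑ t ∈ Finset.range k, (if h : t < k then gradOp k a f ⟨t,h⟩ (nOf N k y) else 0) := by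
    rw [← Fin.sum_univ_eq_sum_range (fun t => if h : t < k then gradOp k a f ⟨t,h⟩ (nOf N k y) else 0) k]
    apply Finset.sum_congr rfl
    intro i _
    rw [dif_pos i.2]
  have hGinv : (∑ i : Fin k, gradInv k a f i (nOf N k y))
      = ∑ t ∈ Finset.range k, (if h : t < k then gradInv k a f ⟨t,h⟩ (nOf N k y) else 0) := by
    rw [← Fin.sum_univ_eq_sum_range (fun t => if h : t < k then gradInv k a f ⟨t,h⟩ (nOf N k y) else 0) k]
    apply Finset.sum_congr rfl
    intro i _
    rw [dif_pos i.2]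
  rw [hGop, hGinv, partition hy hN h0, partition hy hN h0]
  simp only [genDualN]
  congr 1
  · rw [Finset.mul_sum]
    apply Finset.sum_congr rfl
    intro v hv
    simp only [Finset.mem_Icc] at hv
    rw [mul_assoc R, cluster_gradOp hb2 hy hk hv.1 hv.2]
    ring
  · rw [Finset.mul_sum]
    have hstep : ∀ v ∈ Finset.Icc 1 N,
        L * (1 - q⁻¹) * (∑ t ∈ Finset.Ico (cumY N y (v+1)) (cumY N y v),
          (if h : t < k then gradInv k a f ⟨t,h⟩ (nOf N k y) else 0))
        = ∑ d ∈ Finset.Icc 1 v, L * ((q ^ (-(y v : ℤ)) - 1) * (a d)⁻¹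
            * (q ^ (-(∑ m ∈ Finset.Ico d v, (y m : ℤ)))) * f (nOf N k (ymoveN y v d))) := by
      intro v hv
      simp only [Finset.mem_Icc] at hv
      rw [mul_assoc L, cluster_gradInv hb1 hy hk hq hv.1 hv.2, Finset.mul_sum]
    rw [Finset.sum_congr rfl hstep]
    rw [sum_swap_tri N (fun v d => L * ((q ^ (-(y v : ℤ)) - 1) * (a d)⁻¹
      * (q ^ (-(∑ m ∈ Finset.Ico d v, (y m : ℤ)))) * f (nOf N k (ymoveN y v d))))]
    apply Finset.sum_congr rfl
    intro d _
    rw [Finset.mul_sum]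
    apply Finset.sum_congr rfl
    intro v _
    ring


lemma nOf_last_zero {N k : ℕ} {y : ℕ → ℕ} (hy : YNk N k y) (hk : 1 ≤ k) (hy0 : 1 ≤ y 0)
    (h : k - 1 < k) : nOf N k y ⟨k-1, h⟩ = 0 := by
  have h0 := cum_zero hy
  have h1 := cum_succ (N := N) (y := y) (v := 0) (by omega)
  norm_num at h1
  apply nOf_eq (by omega) _ (show cumY N y 1 ≤ k - 1 by omega) (show k - 1 < cumY N y 0 by omega)

lemma nOf_pos {N k : ℕ} {y : ℕ → ℕ} (hy : YNk N k y) (hN : 1 ≤ N) (h0 : y 0 = 0)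
    (i : Fin k) : 1 ≤ nOf N k y i := by
  apply nOf_ge hN
  rw [cum_one hy hN h0]
  exact i.2


end Work

open Work in
theorem free_evolution_implies_true_evolution
    (N k : ℕ) (hN : 1 ≤ N) (hk : 1 ≤ k)
    (q : ℝ) (hq0 : 0 < q) (hq1 : q < 1)
    (a : ℕ → ℝ) (ha : ∀ i, 0 < a i) (R L : ℝ) (hR : 0 ≤ R) (hL : 0 ≤ L)
    (h0 : (ℕ → ℕ) → ℝ)
    (u : ℝ → (Fin k → ℕ) → ℝ)
    -- (i) free evolution equations
    (hfree : ∀ t : ℝ, 0 ≤ t → ∀ n : Fin k → ℕ, (∀ i, 1 ≤ n i) →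
      HasDerivWithinAt (fun s => u s n)
        (R * (1 - q) * ∑ i, gradOp k a (u t) i n
          + L * (1 - q⁻¹) * ∑ i, gradInv k a (u t) i n) (Set.Ici 0) t)
    -- (ii) two-body cumulative and boundary conditions
    (hbc : ∀ t : ℝ, 0 ≤ t → ∀ n : Fin k → ℕ, ∀ i : Fin k, ∀ h : i.1 + 1 < k,
      n i = n ⟨i.1 + 1, h⟩ →
        (gradInv k a (u t) i n - q⁻¹ * gradInv k a (u t) ⟨i.1 + 1, h⟩ n = 0)
        ∧ (1 ≤ n i → gradOp k a (u t) i n - q * gradOp k a (u t) ⟨i.1 + 1, h⟩ n = 0))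
    -- (iii) vanishing when the last coordinate is 0
    (hzero : ∀ t : ℝ, 0 ≤ t → ∀ n : Fin k → ℕ, n ⟨k - 1, by omega⟩ = 0 → u t n = 0)
    -- (iv) initial data inside the Weyl chamber
    (hinit : ∀ y : ℕ → ℕ, YNk N k y → u 0 (nOf N k y) = h0 y) :
    (∀ y : ℕ → ℕ, YNk N k y → ∀ t : ℝ, 0 ≤ t →
      HasDerivWithinAt (fun s => u s (nOf N k y))
        (genDualN N q a R L (fun y' => u t (nOf N k y')) y) (Set.Ici 0) t)
    ∧ (∀ t : ℝ, 0 ≤ t → ∀ y : ℕ → ℕ, YNk N k y → 0 < y 0 → u t (nOf N k y) = 0)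
    ∧ (∀ y : ℕ → ℕ, YNk N k y → u 0 (nOf N k y) = h0 y) := by
  have hvanish : ∀ t : ℝ, 0 ≤ t → ∀ y : ℕ → ℕ, YNk N k y → 0 < y 0 → u t (nOf N k y) = 0 := by
    intro t ht y hy hy0
    exact hzero t ht _ (nOf_last_zero hy hk hy0 (by omega))
  refine ⟨?_, hvanish, hinit⟩
  intro y hy t ht
  by_cases hy0 : y 0 = 0
  · have hder := hfree t ht (nOf N k y) (fun i => nOf_pos hy hN hy0 i)
    have hident := main_identity
      (fun n i h hni => (hbc t ht n i h hni).1)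
      (fun n i h hni hpos => (hbc t ht n i h hni).2 hpos)
      hy hy0 hN hk (ne_of_gt hq0) R L
    rw [← hident]
    exact hder
  · have hy0' : 1 ≤ y 0 := by omega
    have hzv : ∀ s : ℝ, 0 ≤ s → u s (nOf N k y) = 0 := fun s hs =>
      hvanish s hs y hy (by omega)
    have hdz : genDualN N q a R L (fun y' => u t (nOf N k y')) y = 0 := by
      rw [genDualN]
      have hs1 : (∑ i ∈ Finset.Icc 1 N, R * a i * (1 - q ^ (y i)) *
          ((fun y' => u t (nOf N k y')) (ymoveN y i (i-1)) - (fun y' => u t (nOf N k y')) y)) = 0 := by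
        apply Finset.sum_eq_zero
        intro i hi
        simp only [Finset.mem_Icc] at hi
        by_cases hyi : y i = 0
        · rw [hyi, pow_zero]
          ring
        · have hmv : YNk N k (ymoveN y i (i-1)) := YNk_move hy (by omega) hi.2 (by omega)
          have hmv0 : 1 ≤ (ymoveN y i (i-1)) 0 := by
            simp only [ymoveN]
            split_ifs <;> omega
          have hz1 : u t (nOf N k (ymoveN y i (i-1))) = 0 :=
            hvanish t ht _ hmv (by omega)
          have hz2 : u t (nOf N k y) = 0 := hvanish t ht y hy (by omega)
          simp only [hz1, hz2]
          ring
      have hs2 : (∑ i ∈ Finset.Icc 1 N, L * (a i)⁻¹ *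
          ∑ j ∈ Finset.Icc i N,
            (q ^ (-(y j : ℤ)) - 1) * q ^ (-(∑ m ∈ Finset.Ico i j, (y m : ℤ)))
              * (fun y' => u t (nOf N k y')) (ymoveN y j i)) = 0 := by
        apply Finset.sum_eq_zero
        intro i hi
        simp only [Finset.mem_Icc] at hi
        have hinner : (∑ j ∈ Finset.Icc i N,
            (q ^ (-(y j : ℤ)) - 1) * q ^ (-(∑ m ∈ Finset.Ico i j, (y m : ℤ)))
              * (fun y' => u t (nOf N k y')) (ymoveN y j i)) = 0 := by
          apply Finset.sum_eq_zero
          intro j hj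
          simp only [Finset.mem_Icc] at hj
          by_cases hyj : y j = 0
          · rw [hyj]
            norm_num
          · have hmv : YNk N k (ymoveN y j i) := YNk_move hy hj.1 hj.2 (by omega)
            have hmv0 : 1 ≤ (ymoveN y j i) 0 := by
              simp only [ymoveN]
              split_ifs <;> omega
            have hz1 : u t (nOf N k (ymoveN y j i)) = 0 :=
              hvanish t ht _ hmv (by omega)
            simp only [hz1]
            ring
        rw [hinner, mul_zero]
      rw [hs1, hs2, add_zero]
    rw [hdz]
    exact (hasDerivWithinAt_const t (Set.Ici (0:ℝ)) (0:ℝ)).congr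
      (fun s hs => (hzv s hs)) (hzv t ht)
end

section
/- Fix k ≥ 1, 0 < q < 1 (more generally q ≠ 0), and positive reals a_1, a_2, …. Let u : ℤ_{≥0}^k → ℝ satisfy the two-body boundary conditions: for every n ∈ ℤ_{≥0}^k and every 1 ≤ i ≤ k−1 with n_i = n_{i+1} ≥ 1, ([∇_a]_i − q[∇_a]_{i+1}) u(n) = 0. Then for every n ∈ ℤ_{≥0}^k and indices b ≥ 0, c ≥ 1 with b + c ≤ k such that n_{b+1} = n_{b+2} = … = n_{b+c} ≥ 1 (a cluster of size c), one has ([∇_a]_r u)(n) = q^{b+c−r} ([∇_a]_{b+c} u)(n) for every b+1 ≤ r ≤ b+c, and consequently (1−q) Σ_{r=b+1}^{b+c} ([∇_a]_r u)(n) = (1 − q^c) ([∇_a]_{b+c} u)(n). -/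
theorem boundary_conditions_cluster (k : ℕ) (hk : 1 ≤ k)
    (q : ℝ) (hq0 : 0 < q) (hq1 : q < 1)
    (a : ℕ → ℝ) (ha : ∀ i, 0 < a i)
    (u : (Fin k → ℕ) → ℝ)
    (hbc : ∀ n : Fin k → ℕ, ∀ i : Fin k, ∀ h : i.1 + 1 < k,
      n i = n ⟨i.1 + 1, h⟩ → 1 ≤ n i →
      gradOp k a u i n - q * gradOp k a u ⟨i.1 + 1, h⟩ n = 0)
    (n : Fin k → ℕ) (b c : ℕ) (hc : 1 ≤ c) (hbck : b + c ≤ k)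
    (hcluster : ∀ r : Fin k, b ≤ r.1 → r.1 < b + c → n r = n ⟨b, by omega⟩)
    (hpos : 1 ≤ n ⟨b, by omega⟩) :
    (∀ r : Fin k, b ≤ r.1 → r.1 < b + c →
      gradOp k a u r n = q ^ (b + c - 1 - r.1) * gradOp k a u ⟨b + c - 1, by omega⟩ n)
    ∧ (1 - q) * (∑ r ∈ Finset.univ.filter (fun r : Fin k => b ≤ r.1 ∧ r.1 < b + c),
          gradOp k a u r n)
        = (1 - q ^ c) * gradOp k a u ⟨b + c - 1, by omega⟩ n := by
  have key : ∀ m : ℕ, ∀ r : Fin k, b ≤ r.1 → r.1 + m = b + c - 1 →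
      gradOp k a u r n = q ^ m * gradOp k a u ⟨b + c - 1, by omega⟩ n := by
    intro m
    induction m with
    | zero =>
      intro r hbr hr
      have : r = ⟨b + c - 1, by omega⟩ := Fin.ext (by simp; omega)
      rw [this]; ring
    | succ m ih =>
      intro r hbr hr
      have h1 : r.1 + 1 < k := by omega
      have heq : n r = n ⟨r.1 + 1, h1⟩ := by
        rw [hcluster r hbr (by omega), hcluster ⟨r.1 + 1, h1⟩ (by simp; omega) (by simp; omega)]
      have hpos' : 1 ≤ n r := by rw [hcluster r hbr (by omega)]; exact hpos
      have h2 := hbc n r h1 heq hpos'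
      have h3 := ih ⟨r.1 + 1, h1⟩ (by simp; omega) (by simp; omega)
      rw [h3] at h2
      rw [sub_eq_zero] at h2
      rw [h2]; ring
  refine ⟨fun r hbr hr => key (b + c - 1 - r.1) r hbr (by omega), ?_⟩
  have hsum : (∑ r ∈ Finset.univ.filter (fun r : Fin k => b ≤ r.1 ∧ r.1 < b + c),
      gradOp k a u r n)
      = (∑ j ∈ Finset.range c, q ^ j) * gradOp k a u ⟨b + c - 1, by omega⟩ n := by
    rw [Finset.sum_mul]
    refine Finset.sum_nbij' (fun r => b + c - 1 - r.1) (fun j => ⟨b + c - 1 - j, by omega⟩)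
      ?_ ?_ ?_ ?_ ?_
    · intro r hr
      simp only [Finset.mem_filter, Finset.mem_univ, true_and] at hr
      simp only [Finset.mem_range]; omega
    · intro j hj
      simp only [Finset.mem_range] at hj
      simp only [Finset.mem_filter, Finset.mem_univ, true_and]; omega
    · intro r hr
      simp only [Finset.mem_filter, Finset.mem_univ, true_and] at hr
      exact Fin.ext (by simp; omega)
    · intro j hj
      simp only [Finset.mem_range] at hj
      simp; omega
    · intro r hr
      simp only [Finset.mem_filter, Finset.mem_univ, true_and] at hr
      exact key (b + c - 1 - r.1) r hr.1 (by omega)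
  rw [hsum]
  have hg := geom_sum_mul q c
  have : (1 - q) * ∑ j ∈ Finset.range c, q ^ j = 1 - q ^ c := by
    have : (∑ i ∈ Finset.range c, q ^ i) * (q - 1) = q ^ c - 1 := hg
    nlinarith [this]
  rw [← mul_assoc, this]
end

section
/- Let 0 < q < 1 and 0 ≤ a < 1. If X is a q-geometric random variable with parameter a, i.e. P(X = k) = (a;q)_∞ · a^k / (q;q)_k for k ∈ ℤ_{≥0}, then E[q^X] = 1 − a; equivalently, Σ_{k=0}^∞ (a;q)_∞ · (a q)^k / (q;q)_k = 1 − a. -/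
set_option maxHeartbeats 1000000

open Filter Topology

namespace QGeoAux

variable {q : ℝ}

noncomputable def c (q : ℝ) (k : ℕ) : ℝ := ∏ i ∈ Finset.Icc 1 k, (1 - q ^ i)

lemma c_zero : c q 0 = 1 := by simp [c]

lemma c_succ (k : ℕ) : c q (k + 1) = c q k * (1 - q ^ (k + 1)) := by
  rw [c, c, Finset.prod_Icc_succ_top (by omega)]

lemma c_eq_range (k : ℕ) : c q k = ∏ i ∈ Finset.range k, (1 - q * q ^ i) := by
  induction k with
  | zero => simp [c_zero]
  | succ n ih => rw [c_succ, ih, Finset.prod_range_succ, ← pow_succ']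

lemma fact_pos {x : ℝ} (hq0 : 0 < q) (hq1 : q < 1) (hx0 : 0 ≤ x) (hx1 : x < 1) (i : ℕ) :
    0 < 1 - x * q ^ i := by
  have h1 : q ^ i ≤ 1 := pow_le_one₀ hq0.le hq1.le
  have : x * q ^ i ≤ x * 1 := by
    apply mul_le_mul_of_nonneg_left h1 hx0
  nlinarith

lemma log_summable {x : ℝ} (hq0 : 0 < q) (hq1 : q < 1) (hx0 : 0 ≤ x) (hx1 : x < 1) :
    Summable fun i : ℕ => Real.log (1 - x * q ^ i) := by
  rw [← summable_neg_iff]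
  apply Summable.of_nonneg_of_le (g := fun i => -Real.log (1 - x * q ^ i))
    (f := fun i => (1 - x)⁻¹ * q ^ i)
  · intro i
    have := fact_pos hq0 hq1 hx0 hx1 i
    simp only [neg_nonneg]
    apply Real.log_nonpos (by linarith)
    nlinarith [pow_nonneg hq0.le i]
  · intro i
    have hp := fact_pos hq0 hq1 hx0 hx1 i
    have h1 : Real.log ((1 - x * q ^ i)⁻¹) ≤ (1 - x * q ^ i)⁻¹ - 1 :=
      Real.log_le_sub_one_of_pos (by positivity)
    rw [Real.log_inv] at h1
    have h2 : (1 - x * q ^ i)⁻¹ - 1 = (x * q ^ i) / (1 - x * q ^ i) := by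
      field_simp
      ring
    have h3 : 1 - x ≤ 1 - x * q ^ i := by
      nlinarith [pow_le_one₀ hq0.le hq1.le (n := i), pow_nonneg hq0.le i]
    have h4 : (x * q ^ i) / (1 - x * q ^ i) ≤ (x * q ^ i) / (1 - x) := by
      rw [div_eq_mul_inv, div_eq_mul_inv]
      exact mul_le_mul_of_nonneg_left (inv_anti₀ (by linarith) h3)
        (mul_nonneg hx0 (pow_nonneg hq0.le i))
    have h5 : (x * q ^ i) / (1 - x) ≤ (1 - x)⁻¹ * q ^ i := by
      rw [div_eq_inv_mul]
      have : x * q ^ i ≤ q ^ i := by nlinarith [pow_nonneg hq0.le i]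
      have hinv : (0:ℝ) ≤ (1 - x)⁻¹ := inv_nonneg.mpr (by linarith)
      nlinarith
    linarith
  · exact (summable_geometric_of_lt_one hq0.le hq1).mul_left _

lemma multipliable {x : ℝ} (hq0 : 0 < q) (hq1 : q < 1) (hx0 : 0 ≤ x) (hx1 : x < 1) :
    Multipliable fun i : ℕ => 1 - x * q ^ i :=
  Real.multipliable_of_summable_log (fun i => fact_pos hq0 hq1 hx0 hx1 i)
    (log_summable hq0 hq1 hx0 hx1)

lemma tprod_pos {x : ℝ} (hq0 : 0 < q) (hq1 : q < 1) (hx0 : 0 ≤ x) (hx1 : x < 1) :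
    0 < ∏' i : ℕ, (1 - x * q ^ i) := by
  rw [← Real.rexp_tsum_eq_tprod (fun i => fact_pos hq0 hq1 hx0 hx1 i)
    (log_summable hq0 hq1 hx0 hx1)]
  exact Real.exp_pos _

lemma tendsto_partial_prod {x : ℝ} (hq0 : 0 < q) (hq1 : q < 1) (hx0 : 0 ≤ x) (hx1 : x < 1) :
    Tendsto (fun n => ∏ i ∈ Finset.range n, (1 - x * q ^ i)) atTop
      (𝓝 (∏' i : ℕ, (1 - x * q ^ i))) :=
  (multipliable hq0 hq1 hx0 hx1).hasProd.tendsto_prod_nat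

/-- positive lower bound for `c q k`. -/
lemma c_ge (hq0 : 0 < q) (hq1 : q < 1) (k : ℕ) :
    (∏' i : ℕ, (1 - q * q ^ i)) ≤ c q k := by
  rw [c_eq_range]
  have hT := tendsto_partial_prod hq0 hq1 hq0.le hq1
  apply le_of_tendsto hT
  filter_upwards [eventually_ge_atTop k] with n hn
  have : ∏ i ∈ Finset.range n, (1 - q * q ^ i)
      = (∏ i ∈ Finset.range k, (1 - q * q ^ i)) * ∏ i ∈ Finset.Ico k n, (1 - q * q ^ i) := by
    rw [Finset.prod_range_mul_prod_Ico _ hn]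
  rw [this]
  have h1 : ∏ i ∈ Finset.Ico k n, (1 - q * q ^ i) ≤ 1 := by
    apply Finset.prod_le_one
    · intro i _; exact (fact_pos hq0 hq1 hq0.le hq1 i).le
    · intro i _
      nlinarith [pow_nonneg hq0.le i, fact_pos hq0 hq1 hq0.le hq1 i]
  have h2 : 0 < ∏ i ∈ Finset.range k, (1 - q * q ^ i) :=
    Finset.prod_pos fun i _ => fact_pos hq0 hq1 hq0.le hq1 i
  nlinarith

lemma c_pos (hq0 : 0 < q) (hq1 : q < 1) (k : ℕ) : 0 < c q k := by
  rw [c_eq_range]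
  exact Finset.prod_pos fun i _ => fact_pos hq0 hq1 hq0.le hq1 i

noncomputable def S (q x : ℝ) : ℝ := ∑' k : ℕ, x ^ k / c q k

lemma summable_S {x : ℝ} (hq0 : 0 < q) (hq1 : q < 1) (hx0 : 0 ≤ x) (hx1 : x < 1) :
    Summable fun k : ℕ => x ^ k / c q k := by
  set P := ∏' i : ℕ, (1 - q * q ^ i) with hP
  have hPpos : 0 < P := tprod_pos hq0 hq1 hq0.le hq1
  apply Summable.of_nonneg_of_le (f := fun k => P⁻¹ * x ^ k)
  · intro k; exact div_nonneg (pow_nonneg hx0 _) (c_pos hq0 hq1 k).le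
  · intro k
    rw [div_eq_inv_mul]
    apply mul_le_mul_of_nonneg_right _ (pow_nonneg hx0 _)
    exact inv_anti₀ hPpos (c_ge hq0 hq1 k)
  · exact (summable_geometric_of_lt_one hx0 hx1).mul_left _

lemma funEq (hq0 : 0 < q) (hq1 : q < 1) {x : ℝ} (hx0 : 0 ≤ x) (hx1 : x < 1) :
    S q (q * x) = (1 - x) * S q x := by
  have hqx0 : 0 ≤ q * x := mul_nonneg hq0.le hx0
  have hqx1 : q * x < 1 := by nlinarith
  have hS := summable_S hq0 hq1 hx0 hx1
  have hSq := summable_S hq0 hq1 hqx0 hqx1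
  have key : S q x - S q (q * x) = x * S q x := by
    have h1 : S q x - S q (q * x) = ∑' k : ℕ, (x ^ k / c q k - (q * x) ^ k / c q k) :=
      (Summable.tsum_sub hS hSq).symm
    have hg : Summable fun k : ℕ => x ^ k / c q k - (q * x) ^ k / c q k := hS.sub hSq
    have h0 := Summable.tsum_eq_zero_add hg
    have h2 : ∀ k : ℕ, x ^ (k + 1) / c q (k + 1) - (q * x) ^ (k + 1) / c q (k + 1)
        = x * (x ^ k / c q k) := by
      intro k
      have hc := c_succ (q := q) k
      have hck := c_pos hq0 hq1 k
      have hk1 : (0:ℝ) < 1 - q ^ (k + 1) := by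
        have : q ^ (k + 1) < 1 := pow_lt_one₀ hq0.le hq1 (by omega)
        linarith
      rw [hc]
      have hxp : (q * x) ^ (k + 1) = q ^ (k + 1) * x ^ (k + 1) := by rw [mul_pow]
      rw [hxp]
      field_simp
      ring
    rw [h1, h0]
    simp only [pow_zero, c_zero, div_one, sub_self, zero_add]
    rw [tsum_congr h2, tsum_mul_left]
    rfl
  have : S q (q * x) = S q x - x * S q x := by linarith
  rw [this]; ring

lemma iterEq (hq0 : 0 < q) (hq1 : q < 1) {x : ℝ} (hx0 : 0 ≤ x) (hx1 : x < 1) (n : ℕ) :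
    S q (q ^ n * x) = S q x * ∏ i ∈ Finset.range n, (1 - x * q ^ i) := by
  induction n with
  | zero => simp
  | succ n ih =>
    have hy0 : 0 ≤ q ^ n * x := mul_nonneg (pow_nonneg hq0.le n) hx0
    have hy1 : q ^ n * x < 1 := by
      have h1 : q ^ n ≤ 1 := pow_le_one₀ hq0.le hq1.le
      nlinarith
    have h := funEq hq0 hq1 hy0 hy1
    have harg : q * (q ^ n * x) = q ^ (n + 1) * x := by ring
    rw [harg] at h
    rw [h, ih, Finset.prod_range_succ]
    ring

lemma S_ge_one (hq0 : 0 < q) (hq1 : q < 1) {y : ℝ} (hy0 : 0 ≤ y) (hy1 : y < 1) :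
    1 ≤ S q y := by
  have hS := summable_S hq0 hq1 hy0 hy1
  have := Summable.le_tsum hS 0 (fun i _ => div_nonneg (pow_nonneg hy0 _) (c_pos hq0 hq1 i).le)
  simpa [S, c_zero] using this

lemma S_le (hq0 : 0 < q) (hq1 : q < 1) {x y : ℝ} (hx0 : 0 ≤ x) (hx1 : x < 1)
    (hy0 : 0 ≤ y) (hyx : y ≤ x) :
    S q y ≤ 1 + y * ((∏' i : ℕ, (1 - q * q ^ i))⁻¹ * (1 - x)⁻¹) := by
  set P := ∏' i : ℕ, (1 - q * q ^ i) with hPdef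
  have hPpos : 0 < P := tprod_pos hq0 hq1 hq0.le hq1
  have hy1 : y < 1 := lt_of_le_of_lt hyx hx1
  have hS := summable_S hq0 hq1 hy0 hy1
  have h0 := Summable.tsum_eq_zero_add hS
  have hbound : ∀ k : ℕ, y ^ (k + 1) / c q (k + 1) ≤ y * (P⁻¹ * x ^ k) := by
    intro k
    have hc := c_ge hq0 hq1 (k + 1)
    have hck := c_pos hq0 hq1 (k + 1)
    have h1 : y ^ (k + 1) ≤ y * x ^ k := by
      rw [pow_succ']
      exact mul_le_mul_of_nonneg_left (pow_le_pow_left₀ hy0 hyx k) hy0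
    calc y ^ (k + 1) / c q (k + 1) ≤ y ^ (k + 1) / P := by
          rw [div_eq_mul_inv, div_eq_mul_inv]
          exact mul_le_mul_of_nonneg_left (inv_anti₀ hPpos hc) (pow_nonneg hy0 _)
      _ ≤ (y * x ^ k) / P := by
          exact div_le_div_of_nonneg_right h1 hPpos.le
      _ = y * (P⁻¹ * x ^ k) := by rw [div_eq_mul_inv]; ring
  have hgsum : Summable fun k : ℕ => y * (P⁻¹ * x ^ k) :=
    (((summable_geometric_of_lt_one hx0 hx1).mul_left P⁻¹).mul_left y)
  have htail : (∑' k : ℕ, y ^ (k + 1) / c q (k + 1)) ≤ ∑' k : ℕ, y * (P⁻¹ * x ^ k) := by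
    apply Summable.tsum_le_tsum hbound _ hgsum
    exact (summable_nat_add_iff 1).mpr hS
  have hgeo : (∑' k : ℕ, y * (P⁻¹ * x ^ k)) = y * (P⁻¹ * (1 - x)⁻¹) := by
    rw [tsum_mul_left, tsum_mul_left, tsum_geometric_of_lt_one hx0 hx1]
  have : S q y = 1 + ∑' k : ℕ, y ^ (k + 1) / c q (k + 1) := by
    rw [S, h0]; simp [c_zero]
  rw [this]
  rw [hgeo] at htail
  linarith

lemma S_mul_tprod (hq0 : 0 < q) (hq1 : q < 1) {x : ℝ} (hx0 : 0 ≤ x) (hx1 : x < 1) :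
    S q x * ∏' i : ℕ, (1 - x * q ^ i) = 1 := by
  set C : ℝ := (∏' i : ℕ, (1 - q * q ^ i))⁻¹ * (1 - x)⁻¹ with hC
  have hT1 : Tendsto (fun n : ℕ => S q x * ∏ i ∈ Finset.range n, (1 - x * q ^ i)) atTop
      (𝓝 (S q x * ∏' i : ℕ, (1 - x * q ^ i))) :=
    (tendsto_partial_prod hq0 hq1 hx0 hx1).const_mul _
  have heq : (fun n : ℕ => S q x * ∏ i ∈ Finset.range n, (1 - x * q ^ i))
      = fun n : ℕ => S q (q ^ n * x) := by
    funext n; exact (iterEq hq0 hq1 hx0 hx1 n).symm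
  rw [heq] at hT1
  have hxn0 : ∀ n : ℕ, 0 ≤ q ^ n * x := fun n => mul_nonneg (pow_nonneg hq0.le n) hx0
  have hxn1 : ∀ n : ℕ, q ^ n * x < 1 := by
    intro n
    have h1 : q ^ n ≤ 1 := pow_le_one₀ hq0.le hq1.le
    nlinarith
  have hlow : ∀ n : ℕ, 1 ≤ S q (q ^ n * x) := fun n => S_ge_one hq0 hq1 (hxn0 n) (hxn1 n)
  have hup : ∀ n : ℕ, S q (q ^ n * x) ≤ 1 + (q ^ n * x) * C := by
    intro n
    apply S_le hq0 hq1 hx0 hx1 (hxn0 n)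
    have h1 : q ^ n ≤ 1 := pow_le_one₀ hq0.le hq1.le
    nlinarith
  have hq0' : Tendsto (fun n : ℕ => q ^ n * x) atTop (𝓝 0) := by
    have := (tendsto_pow_atTop_nhds_zero_of_lt_one hq0.le hq1).mul_const x
    simpa using this
  have hupT : Tendsto (fun n : ℕ => 1 + (q ^ n * x) * C) atTop (𝓝 1) := by
    have := (hq0'.mul_const C).const_add 1
    simpa using this
  have hT2 : Tendsto (fun n : ℕ => S q (q ^ n * x)) atTop (𝓝 1) :=
    tendsto_of_tendsto_of_tendsto_of_le_of_le tendsto_const_nhds hupT hlow hup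
  exact tendsto_nhds_unique hT1 hT2

end QGeoAux

theorem qGeometric_expectation_q_pow (q a : ℝ) (hq0 : 0 < q) (hq1 : q < 1)
    (ha0 : 0 ≤ a) (ha1 : a < 1) :
    ∑' k : ℕ, (∏' i : ℕ, (1 - a * q ^ i)) * (a * q) ^ k
        / (∏ i ∈ Finset.Icc 1 k, (1 - q ^ i))
      = 1 - a := by
  classical
  have hP : ∀ k : ℕ, (∏' i : ℕ, (1 - a * q ^ i)) * (a * q) ^ k
      / (∏ i ∈ Finset.Icc 1 k, (1 - q ^ i))
      = (∏' i : ℕ, (1 - a * q ^ i)) * ((a * q) ^ k / QGeoAux.c q k) := by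
    intro k; rw [mul_div_assoc]; rfl
  rw [tsum_congr hP, tsum_mul_left]
  have hS1 : (∑' k : ℕ, (a * q) ^ k / QGeoAux.c q k) = QGeoAux.S q (a * q) := rfl
  rw [hS1]
  have hcomm : a * q = q * a := mul_comm a q
  rw [hcomm, QGeoAux.funEq hq0 hq1 ha0 ha1]
  have hmain := QGeoAux.S_mul_tprod hq0 hq1 ha0 ha1
  nlinarith [hmain]
end
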